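/- The graph H_8 is 4-χρ-vertex-critical; that is, χρ(H_8) = 4 and χρ(H_8 − v) < 4 for every vertex v of H_8. -/

import Mathlib

open SimpleGraph

/-- A `k`-packing coloring of `G`: colors in `{1,…,k}` and distinct vertices of equal color `i`
are at (extended, shortest-path) distance greater than `i`. -/
def IsPackingColoring {V : Type*} (G : SimpleGraph V) (k : ℕ) (c : V → ℕ) : Prop :=
  (∀ v, 1 ≤ c v ∧ c v ≤ k) ∧
    ∀ u v : V, u ≠ v → c u = c v → (c u : ℕ∞) < G.edist u v

/-- The packing chromatic number of `G`: the least `k` admitting a `k`-packing coloring. -/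
noncomputable def packingChromaticNumber {V : Type*} (G : SimpleGraph V) : ℕ :=
  sInf {k | ∃ c : V → ℕ, IsPackingColoring G k c}

/-- `G` is `4`-`χρ`-vertex-critical: `χρ(G) = 4` and deleting any vertex drops `χρ` below `4`. -/
def FourVertexCritical {V : Type*} (G : SimpleGraph V) : Prop :=
  packingChromaticNumber G = 4 ∧
    ∀ v : V, packingChromaticNumber (G.induce ({v}ᶜ : Set V)) < 4

/-- `G` contains a (not necessarily induced) subgraph isomorphic to `H`. -/
def HasCopy {W V : Type*} (H : SimpleGraph W) (G : SimpleGraph V) : Prop :=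
  ∃ f : H →g G, Function.Injective f

/-- The cycle on `n` vertices (for `n ≥ 3`). -/
def CycGraph (n : ℕ) : SimpleGraph (Fin n) :=
  SimpleGraph.fromRel (fun i j => (i.val + 1) % n = j.val)

/-- `H₈`: the 8-cycle `b(0)-c(1)-d(2)-e(3)-g(4)-h(5)-i(6)-j(7)-b(0)`, a pendant vertex
`a(8)` adjacent to `b=0`, a pendant vertex `f(9)` adjacent to `e=3`, plus the edge
`a(8)-i(6)`. -/
def H8graph : SimpleGraph (Fin 10) :=
  SimpleGraph.fromRel (fun i j =>
    (j.val = i.val + 1 ∧ j.val ≤ 7) ∨ (i.val = 0 ∧ j.val = 7) ∨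
      (i.val = 0 ∧ j.val = 8) ∨ (i.val = 3 ∧ j.val = 9) ∨ (i.val = 6 ∧ j.val = 8))


namespace H8aux

instance : DecidableRel H8graph.Adj := fun a b =>
  inferInstanceAs (Decidable (a ≠ b ∧ (((b.val = a.val + 1 ∧ b.val ≤ 7) ∨ (a.val = 0 ∧ b.val = 7) ∨
      (a.val = 0 ∧ b.val = 8) ∨ (a.val = 3 ∧ b.val = 9) ∨ (a.val = 6 ∧ b.val = 8)) ∨
      ((a.val = b.val + 1 ∧ a.val ≤ 7) ∨ (b.val = 0 ∧ a.val = 7) ∨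
      (b.val = 0 ∧ a.val = 8) ∨ (b.val = 3 ∧ a.val = 9) ∨ (b.val = 6 ∧ a.val = 8)))))

def Drows : List (List ℕ) :=
  [[0,1,2,3,4,3,2,1,1,4],[1,0,1,2,3,4,3,2,2,3],[2,1,0,1,2,3,4,3,3,2],
   [3,2,1,0,1,2,3,4,4,1],[4,3,2,1,0,1,2,3,3,2],[3,4,3,2,1,0,1,2,2,3],
   [2,3,4,3,2,1,0,1,1,4],[1,2,3,4,3,2,1,0,2,5],[1,2,3,4,3,2,1,2,0,5],
   [4,3,2,1,2,3,4,5,5,0]]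

def DN (u v : ℕ) : ℕ := (Drows.getD u []).getD v 0

def D (u v : Fin 10) : ℕ := DN u.val v.val

lemma hLip : ∀ u a b : Fin 10, H8graph.Adj a b → D u b ≤ D u a + 1 := by decide
lemma hGrad : ∀ u v : Fin 10, u ≠ v → ∃ y, H8graph.Adj y v ∧ D u y + 1 = D u v := by decide
lemma D_self : ∀ u : Fin 10, D u u = 0 := by decide
lemma D_eq_zero : ∀ u v : Fin 10, D u v = 0 → u = v := by decide

lemma walk_bound (u : Fin 10) {x y : Fin 10} (p : H8graph.Walk x y) :
    D u y ≤ D u x + p.length := by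
  induction p with
  | nil => simp
  | @cons a b c h q ih =>
      have h1 := hLip u a b h
      simp only [SimpleGraph.Walk.length_cons]
      omega

lemma D_le_edist (u v : Fin 10) : (D u v : ℕ∞) ≤ H8graph.edist u v := by
  rw [SimpleGraph.edist_eq_sInf]
  refine le_sInf ?_
  rintro x ⟨p, rfl⟩
  have h := walk_bound u p
  have h0 := D_self u
  exact_mod_cast Nat.cast_le.mpr (by omega : D u v ≤ p.length)

lemma edist_le_D_aux : ∀ n : ℕ, ∀ u v : Fin 10, D u v ≤ n → H8graph.edist u v ≤ (D u v : ℕ∞) := by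
  intro n
  induction n with
  | zero =>
      intro u v h
      have huv := D_eq_zero u v (Nat.le_zero.mp h)
      subst huv
      simp [D_self, SimpleGraph.edist_self]
  | succ n ih =>
      intro u v h
      rcases eq_or_ne u v with rfl | hne
      · simp [D_self, SimpleGraph.edist_self]
      · obtain ⟨y, hadj, hy⟩ := hGrad u v hne
        have hle : D u y ≤ n := by omega
        calc H8graph.edist u v ≤ H8graph.edist u y + H8graph.edist y v :=
              SimpleGraph.edist_triangle
          _ = H8graph.edist u y + 1 := by rw [SimpleGraph.edist_eq_one_iff_adj.mpr hadj]
          _ ≤ (D u y : ℕ∞) + 1 := add_le_add (ih u y hle) le_rfl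
          _ = ((D u y + 1 : ℕ) : ℕ∞) := by push_cast; ring
          _ = (D u v : ℕ∞) := by rw [hy]

lemma edist_le_D (u v : Fin 10) : H8graph.edist u v ≤ (D u v : ℕ∞) :=
  edist_le_D_aux (D u v) u v le_rfl

lemma edist_hom {V W : Type*} {G : SimpleGraph V} {G' : SimpleGraph W} (f : G →g G')
    (u v : V) : G'.edist (f u) (f v) ≤ G.edist u v := by
  rcases eq_or_ne (G.edist u v) ⊤ with h | h
  · simp [h]
  · obtain ⟨p, hp⟩ := SimpleGraph.exists_walk_of_edist_ne_top h
    calc G'.edist (f u) (f v) ≤ (p.map f).length := SimpleGraph.edist_le _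
      _ = (p.length : ℕ∞) := by rw [SimpleGraph.Walk.length_map]
      _ = G.edist u v := by exact_mod_cast hp

/-! ### Exhaustive search for 3-packing colorings -/

def C : List (ℕ × ℕ × ℕ) := [(0,1,1), (1,2,1), (2,3,1), (3,4,1), (4,5,1), (5,6,1), (6,7,1), (0,7,1), (0,8,1), (3,9,1), (6,8,1), (0,2,2), (1,3,2), (2,4,2), (3,5,2), (4,6,2), (5,7,2), (0,6,2), (1,7,2), (1,8,2), (5,8,2), (7,8,2), (2,9,2), (4,9,2), (0,3,3), (1,4,3), (2,5,3), (3,6,3), (4,7,3), (0,5,3), (1,6,3), (2,7,3), (2,8,3), (4,8,3), (1,9,3), (5,9,3)]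

def conflict (l : List ℕ) : Bool :=
  C.any fun t => decide (t.1 < l.length) && decide (t.2.1 < l.length) &&
    (l.getD t.1 0 == l.getD t.2.1 0) && decide (t.2.2 ≤ l.getD t.1 0)

lemma conflict_mono {l : List ℕ} (h : conflict l = true) (xs : List ℕ) :
    conflict (l ++ xs) = true := by
  rcases List.any_eq_true.mp h with ⟨t, ht, hp⟩
  refine List.any_eq_true.mpr ⟨t, ht, ?_⟩
  simp only [Bool.and_eq_true, decide_eq_true_eq, beq_iff_eq] at hp ⊢
  obtain ⟨⟨⟨h1, h2⟩, h3⟩, h4⟩ := hp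
  rw [List.getD_append _ _ _ _ h1, List.getD_append _ _ _ _ h2]
  refine ⟨⟨⟨?_, ?_⟩, h3⟩, h4⟩ <;> simp [List.length_append] <;> omega

def search : ℕ → List ℕ → Bool
  | 0, l => conflict l
  | (f+1), l => conflict l || ([1,2,3].all fun x => search f (l ++ [x]))

lemma search_sound : ∀ (f : ℕ) (l : List ℕ), search f l = true →
    ∀ xs : List ℕ, xs.length = f → (∀ x ∈ xs, x = 1 ∨ x = 2 ∨ x = 3) →
    conflict (l ++ xs) = true := by
  intro f
  induction f with
  | zero =>
      intro l h xs hlen _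
      rw [List.length_eq_zero_iff.mp hlen]
      simpa [search] using h
  | succ f ih =>
      intro l h xs hlen hmem
      cases xs with
      | nil => simp at hlen
      | cons x xs' =>
          rcases Bool.or_eq_true _ _ |>.mp h with h1 | h2
          · exact conflict_mono h1 _
          · have hx : x ∈ ([1,2,3] : List ℕ) := by
              rcases hmem x List.mem_cons_self with rfl | rfl | rfl <;> simp
            have hs : search f (l ++ [x]) = true :=
              List.all_eq_true.mp h2 x hx
            have := ih (l ++ [x]) hs xs' (by simpa using hlen)
              (fun y hy => hmem y (List.mem_cons_of_mem _ hy))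
            simpa [List.append_assoc] using this

lemma search_root : search 10 [] = true := by decide

lemma C_spec : ∀ t ∈ C, t.1 < 10 ∧ t.2.1 < 10 ∧ t.1 ≠ t.2.1 ∧ DN t.1 t.2.1 ≤ t.2.2 := by decide

lemma no3 (c : Fin 10 → ℕ) (hb : ∀ v, 1 ≤ c v ∧ c v ≤ 3)
    (h2 : ∀ u v : Fin 10, u ≠ v → c u = c v → c u < D u v) : False := by
  set m : List ℕ := [c 0, c 1, c 2, c 3, c 4, c 5, c 6, c 7, c 8, c 9] with hm
  have hget : ∀ i (h : i < 10), m.getD i 0 = c ⟨i, h⟩ := by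
    intro i h
    interval_cases i <;> rfl
  have hposs : ∀ x ∈ m, x = 1 ∨ x = 2 ∨ x = 3 := by
    intro x hx
    have b0 := hb 0; have b1 := hb 1; have b2 := hb 2; have b3 := hb 3; have b4 := hb 4
    have b5 := hb 5; have b6 := hb 6; have b7 := hb 7; have b8 := hb 8; have b9 := hb 9
    simp only [hm, List.mem_cons, List.not_mem_nil, or_false] at hx
    rcases hx with rfl|rfl|rfl|rfl|rfl|rfl|rfl|rfl|rfl|rfl <;> omega
  have hconf : conflict m = true := by
    have := search_sound 10 [] search_root m rfl hposs
    simpa using this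
  rcases List.any_eq_true.mp hconf with ⟨t, htC, hp⟩
  obtain ⟨hu, hv, hne, hDN⟩ := C_spec t htC
  simp only [Bool.and_eq_true, decide_eq_true_eq, beq_iff_eq] at hp
  have hmlen : m.length = 10 := rfl
  obtain ⟨⟨⟨_, _⟩, heq⟩, hge⟩ := hp
  rw [hmlen] at *
  have e1 := hget t.1 hu
  have e2 := hget t.2.1 hv
  have hlt := h2 ⟨t.1, hu⟩ ⟨t.2.1, hv⟩ (by simpa [Fin.ext_iff] using hne) (by rw [← e1, ← e2]; exact heq)
  have : D ⟨t.1, hu⟩ ⟨t.2.1, hv⟩ = DN t.1 t.2.1 := rfl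
  omega

/-! ### Colorings -/

def c4 : Fin 10 → ℕ := ![1,2,1,3,1,2,1,3,4,1]

lemma c4_pairs : ∀ u v : Fin 10, u ≠ v → c4 u = c4 v → c4 u < D u v := by decide

lemma four_mem : 4 ∈ {k | ∃ c : Fin 10 → ℕ, IsPackingColoring H8graph k c} := by
  refine ⟨c4, fun v => by revert v; decide, ?_⟩
  intro u v hne heq
  exact lt_of_lt_of_le (Nat.cast_lt.mpr (c4_pairs u v hne heq)) (D_le_edist u v)

def T0 : Fin 10 → ℕ := ![1,3,1,2,1,3,2,1,1,1]
def T1 : Fin 10 → ℕ := ![3,1,1,2,3,1,2,1,1,1]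
def T2 : Fin 10 → ℕ := ![2,1,1,1,2,1,3,1,1,3]
def T3 : Fin 10 → ℕ := ![2,1,3,1,1,2,3,1,1,1]
def T4 : Fin 10 → ℕ := ![2,1,3,1,1,1,3,1,1,2]
def T5 : Fin 10 → ℕ := ![2,1,3,2,1,1,3,1,1,1]
def T6 : Fin 10 → ℕ := ![2,3,1,2,1,3,1,1,1,1]
def T7 : Fin 10 → ℕ := ![1,2,1,3,1,2,1,1,3,1]
def T8 : Fin 10 → ℕ := ![1,2,1,3,1,2,1,3,1,1]
def T9 : Fin 10 → ℕ := ![2,1,3,1,2,1,3,1,1,1]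

lemma induced_lt (v : Fin 10) (t : Fin 10 → ℕ)
    (hb : ∀ u, 1 ≤ t u ∧ t u ≤ 3)
    (h2 : ∀ u w : Fin 10, u ≠ w → u ≠ v → w ≠ v → t u = t w → t u < D u w) :
    packingChromaticNumber (H8graph.induce ({v}ᶜ : Set (Fin 10))) < 4 := by
  have mem : 3 ∈ {k | ∃ c : ({v}ᶜ : Set (Fin 10)) → ℕ,
      IsPackingColoring (H8graph.induce ({v}ᶜ : Set (Fin 10))) k c} := by
    refine ⟨fun x => t x.val, fun x => hb x.val, ?_⟩
    intro x y hxy heq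
    have hxv : (x : Fin 10) ≠ v := x.2
    have hyv : (y : Fin 10) ≠ v := y.2
    have hne : (x : Fin 10) ≠ (y : Fin 10) := fun h => hxy (Subtype.ext h)
    have hlt := h2 x y hne hxv hyv heq
    calc ((t x.val : ℕ) : ℕ∞) < (D x.val y.val : ℕ∞) := Nat.cast_lt.mpr hlt
      _ ≤ H8graph.edist x.val y.val := D_le_edist _ _
      _ ≤ (H8graph.induce ({v}ᶜ : Set (Fin 10))).edist x y :=
          edist_hom (SimpleGraph.Embedding.induce ({v}ᶜ : Set (Fin 10))).toHom x y
  exact lt_of_le_of_lt (Nat.sInf_le mem) (by norm_num)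

end H8aux

theorem H8_fourVertexCritical : FourVertexCritical H8graph := by
  constructor
  · apply le_antisymm
    · exact Nat.sInf_le H8aux.four_mem
    · refine le_csInf ⟨4, H8aux.four_mem⟩ ?_
      intro k hk
      by_contra hcon
      push_neg at hcon
      obtain ⟨c, hc1, hc2⟩ := hk
      refine H8aux.no3 c (fun v => ⟨(hc1 v).1, le_trans (hc1 v).2 (by omega)⟩) ?_
      intro u v hne heq
      exact Nat.cast_lt.mp (lt_of_lt_of_le (hc2 u v hne heq) (H8aux.edist_le_D u v))
  · intro v
    fin_cases v
    · exact H8aux.induced_lt _ H8aux.T0 (by decide) (by decide)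
    · exact H8aux.induced_lt _ H8aux.T1 (by decide) (by decide)
    · exact H8aux.induced_lt _ H8aux.T2 (by decide) (by decide)
    · exact H8aux.induced_lt _ H8aux.T3 (by decide) (by decide)
    · exact H8aux.induced_lt _ H8aux.T4 (by decide) (by decide)
    · exact H8aux.induced_lt _ H8aux.T5 (by decide) (by decide)
    · exact H8aux.induced_lt _ H8aux.T6 (by decide) (by decide)
    · exact H8aux.induced_lt _ H8aux.T7 (by decide) (by decide)
    · exact H8aux.induced_lt _ H8aux.T8 (by decide) (by decide)
    · exact H8aux.induced_lt _ H8aux.T9 (by decide) (by decide)
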